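/- Let f : ℝ_{≥0} → ℝ_{≥0} be non-decreasing with f(x) → ∞. Then there exists a strictly increasing sequence of reals r_0 = 0 < r_1 < r_2 < ⋯ with r_k → ∞ such that, defining the regions R_k = {x ∈ ℤ^d : r_k ≤ ‖x‖_∞ < r_{k+1}}, every axis-parallel box B ⊂ ℤ^d of side length ℓ ≥ 1 intersects at most f(ℓ) + 2 of the regions R_k. -/
import Mathlib


/-- The `ℓ∞` norm of a lattice point. -/
def normInf {d : ℕ} (x : Fin d → ℤ) : ℕ := Finset.univ.sup fun i => (x i).natAbs

lemma normInf_le_of_box {d ℓ : ℕ} (hℓ : 1 ≤ ℓ) (lo x y : Fin d → ℤ)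
    (hx : ∀ i, lo i ≤ x i ∧ x i ≤ lo i + (ℓ : ℤ) - 1)
    (hy : ∀ i, lo i ≤ y i ∧ y i ≤ lo i + (ℓ : ℤ) - 1) :
    normInf x ≤ normInf y + (ℓ - 1) := by
  apply Finset.sup_le
  intro i _
  have h1 := hx i
  have h2 := hy i
  have hle : (y i).natAbs ≤ normInf y :=
    Finset.le_sup (f := fun j => (y j).natAbs) (Finset.mem_univ i)
  omega

/-- Given non-decreasing `f : ℝ_{≥0} → ℝ_{≥0}` with `f(x) → ∞`, there is a strictly
increasing sequence `r 0 = 0 < r 1 < r 2 < ⋯ → ∞` such that, for the regions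
`R_k = {x ∈ ℤ^d : r k ≤ ‖x‖_∞ < r (k+1)}`, every axis-parallel box of side
length `ℓ ≥ 1` intersects at most `f(ℓ) + 2` of the regions. -/
theorem exists_partition_few_regions (d : ℕ) (f : ℝ → ℝ)
    (hmono : MonotoneOn f (Set.Ici 0))
    (hnonneg : ∀ x : ℝ, 0 ≤ x → 0 ≤ f x)
    (htop : Filter.Tendsto f Filter.atTop Filter.atTop) :
    ∃ r : ℕ → ℝ, r 0 = 0 ∧ StrictMono r ∧
      Filter.Tendsto r Filter.atTop Filter.atTop ∧
      ∀ ℓ : ℕ, 1 ≤ ℓ → ∀ lo : Fin d → ℤ,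
        {k : ℕ | ∃ x : Fin d → ℤ,
            (∀ i, lo i ≤ x i ∧ x i ≤ lo i + (ℓ : ℤ) - 1) ∧
            r k ≤ (normInf x : ℝ) ∧ (normInf x : ℝ) < r (k + 1)}.Finite ∧
        ({k : ℕ | ∃ x : Fin d → ℤ,
            (∀ i, lo i ≤ x i ∧ x i ≤ lo i + (ℓ : ℤ) - 1) ∧
            r k ≤ (normInf x : ℝ) ∧ (normInf x : ℝ) < r (k + 1)}.ncard : ℝ)
          ≤ f ℓ + 2 := by
  have hg : ∀ k : ℕ, ∃ C : ℝ, ∀ x : ℝ, C ≤ x → ((k : ℝ) + 1) ≤ f x := by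
    intro k
    obtain ⟨C, hC⟩ := Filter.eventually_atTop.mp
      (Filter.tendsto_atTop.mp htop ((k : ℝ) + 1))
    exact ⟨C, fun x hx => hC x hx⟩
  choose g hg using hg
  set c : ℕ → ℝ := fun k =>
    1 ⊔ (Finset.range (k + 1)).sup' Finset.nonempty_range_add_one g with hc
  have hc1 : ∀ k, 1 ≤ c k := fun k => le_max_left _ _
  have hcg : ∀ k, g k ≤ c k := fun k =>
    le_trans (Finset.le_sup' g (Finset.self_mem_range_succ k)) (le_max_right _ _)
  set r : ℕ → ℝ := fun k => ∑ i ∈ Finset.range k, c i with hr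
  have hr0 : r 0 = 0 := by simp [hr]
  have hrsucc : ∀ k, r (k + 1) = r k + c k := fun k => Finset.sum_range_succ c k
  have hrk : ∀ k : ℕ, (k : ℝ) ≤ r k := by
    intro k
    calc (k : ℝ) = ∑ _i ∈ Finset.range k, (1 : ℝ) := by simp
    _ ≤ r k := Finset.sum_le_sum fun i _ => hc1 i
  refine ⟨r, hr0, strictMono_nat_of_lt_succ fun k => by
      rw [hrsucc]; linarith [hc1 k],
    Filter.tendsto_atTop_mono hrk tendsto_natCast_atTop_atTop, ?_⟩
  intro ℓ hℓ lo
  set S := {k : ℕ | ∃ x : Fin d → ℤ,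
      (∀ i, lo i ≤ x i ∧ x i ≤ lo i + (ℓ : ℤ) - 1) ∧
      r k ≤ (normInf x : ℝ) ∧ (normInf x : ℝ) < r (k + 1)} with hSdef
  have hSsub : S ⊆ Set.Iic (normInf lo + (ℓ - 1)) := by
    intro k hk
    obtain ⟨x, hx, hx1, _⟩ := hk
    have h1 : normInf x ≤ normInf lo + (ℓ - 1) :=
      normInf_le_of_box hℓ lo x lo hx (fun i => ⟨le_refl _, by omega⟩)
    have h2 : (k : ℝ) ≤ ((normInf lo + (ℓ - 1) : ℕ) : ℝ) :=
      le_trans (hrk k) (le_trans hx1 (by exact_mod_cast h1))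
    exact_mod_cast h2
  have hSfin : S.Finite := (Set.finite_Iic _).subset hSsub
  refine ⟨hSfin, ?_⟩
  rcases Set.eq_empty_or_nonempty S with hS | hS
  · rw [hS]
    simp only [Set.ncard_empty, Nat.cast_zero]
    have := hnonneg ℓ (by positivity)
    linarith
  set F := hSfin.toFinset with hF
  have hFne : F.Nonempty := by
    rwa [hF, Set.Finite.toFinset_nonempty]
  set a := F.min' hFne with ha
  set b := F.max' hFne with hb
  have hcard : S.ncard = F.card := Set.ncard_eq_toFinset_card S hSfin
  have hsub : F ⊆ Finset.Icc a b := fun k hk =>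
    Finset.mem_Icc.mpr ⟨F.min'_le k hk, F.le_max' k hk⟩
  have hcard2 : S.ncard ≤ b + 1 - a := by
    rw [hcard]
    calc F.card ≤ (Finset.Icc a b).card := Finset.card_le_card hsub
    _ = b + 1 - a := Nat.card_Icc a b
  by_cases hab : b < a + 2
  · have h2 : S.ncard ≤ 2 := le_trans hcard2 (by omega)
    have := hnonneg ℓ (by positivity)
    have : (S.ncard : ℝ) ≤ 2 := by exact_mod_cast h2
    linarith [hnonneg ℓ (by positivity : (0:ℝ) ≤ ℓ)]
  push_neg at hab
  obtain ⟨xa, hxa, ha1, ha2⟩ : a ∈ S := hSfin.mem_toFinset.mp (F.min'_mem hFne)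
  obtain ⟨xb, hxb, hb1, hb2⟩ : b ∈ S := hSfin.mem_toFinset.mp (F.max'_mem hFne)
  have hN : normInf xb ≤ normInf xa + (ℓ - 1) := normInf_le_of_box hℓ lo xb xa hxb hxa
  have key : r b < r (a + 1) + ((ℓ - 1 : ℕ) : ℝ) := by
    have hN' : (normInf xb : ℝ) ≤ (normInf xa : ℝ) + ((ℓ - 1 : ℕ) : ℝ) := by
      exact_mod_cast hN
    linarith
  have hsum : r b = r (a + 1) + ∑ i ∈ Finset.Ico (a + 1) b, c i := by
    rw [hr]
    simp only [Finset.range_eq_Ico]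
    rw [← Finset.sum_Ico_consecutive c (Nat.zero_le (a + 1)) (by omega : a + 1 ≤ b)]
  have hterm : c (b - 1) ≤ ∑ i ∈ Finset.Ico (a + 1) b, c i :=
    Finset.single_le_sum (fun i _ => le_trans zero_le_one (hc1 i))
      (Finset.mem_Ico.mpr ⟨by omega, by omega⟩)
  have hcb : c (b - 1) < ((ℓ - 1 : ℕ) : ℝ) := by
    rw [hsum] at key
    linarith
  have hfb : ((b - 1 : ℕ) : ℝ) + 1 ≤ f ((ℓ - 1 : ℕ) : ℝ) :=
    hg (b - 1) _ (le_of_lt (lt_of_le_of_lt (hcg (b - 1)) hcb))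
  have hmf : f ((ℓ - 1 : ℕ) : ℝ) ≤ f ℓ := by
    apply hmono (Set.mem_Ici.mpr (by positivity)) (Set.mem_Ici.mpr (by positivity))
    exact_mod_cast Nat.cast_le.mpr (Nat.sub_le ℓ 1)
  have hbf : (b : ℝ) ≤ f ℓ := by
    have hb1' : ((b - 1 : ℕ) : ℝ) = (b : ℝ) - 1 := by
      have : 1 ≤ b := by omega
      push_cast [this]
      ring
    rw [hb1'] at hfb
    linarith
  have hcard3 : (S.ncard : ℝ) ≤ (b : ℝ) + 1 := by
    have : S.ncard ≤ b + 1 := le_trans hcard2 (by omega)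
    exact_mod_cast this
  linarith
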